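/- Let Q*, Q̂ : S × A → ℝ be bounded functions with ‖Q*‖_∞ ≤ r_max/(1-γ) and ‖Q̂‖_∞ ≤ r_max/(1-γ), where 0 ≤ γ < 1 and r_max ≥ 0. Suppose for all (s,a): Q*(s,a) - Q̂(s,a) = γ · Σ_{s',a'} P(s'|s,a)[π*(a'|s')Q*(s',a') - π̂(a'|s')Q̂(s',a')], where P(·|s,a), π*(·|s'), π̂(·|s') are probability distributions on finite sets. If ε_π = sup_{s'} D_TV(π*(·|s'), π̂(·|s')), then sup_{s,a} |Q*(s,a) - Q̂(s,a)| ≤ 2γ r_max ε_π / (1-γ)². -/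
import Mathlib


open Finset

/-- Total variation distance between pmfs on a finite set. -/
noncomputable def tv {X : Type*} [Fintype X] (p q : X → ℝ) : ℝ :=
  (∑ x, |p x - q x|) / 2

/-- Theorem 1 (general oracle imitation discrepancy). -/
theorem stmt0 {S A : Type*} [Fintype S] [Fintype A] [Nonempty S] [Nonempty A]
    (γ rmax : ℝ) (hγ0 : 0 ≤ γ) (hγ1 : γ < 1) (hr : 0 ≤ rmax)
    (Qstar Qhat : S → A → ℝ)
    (hQstar : ∀ s a, |Qstar s a| ≤ rmax / (1 - γ))
    (hQhat : ∀ s a, |Qhat s a| ≤ rmax / (1 - γ))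
    (P : S → A → S → ℝ) (πstar πhat : S → A → ℝ)
    (hPnn : ∀ s a s', 0 ≤ P s a s') (hPsum : ∀ s a, ∑ s', P s a s' = 1)
    (hπsnn : ∀ s' a', 0 ≤ πstar s' a') (hπssum : ∀ s', ∑ a', πstar s' a' = 1)
    (hπhnn : ∀ s' a', 0 ≤ πhat s' a') (hπhsum : ∀ s', ∑ a', πhat s' a' = 1)
    (hBellman : ∀ s a, Qstar s a - Qhat s a =
      γ * ∑ s', ∑ a', P s a s' * (πstar s' a' * Qstar s' a' - πhat s' a' * Qhat s' a'))
    (επ : ℝ) (hεπ : επ = ⨆ s', tv (πstar s') (πhat s')) :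
    ∀ s a, |Qstar s a - Qhat s a| ≤ 2 * γ * rmax * επ / (1 - γ) ^ 2 := by
  have h1γ : (0:ℝ) < 1 - γ := by linarith
  set M : ℝ := rmax / (1 - γ) with hMdef
  have hM : 0 ≤ M := div_nonneg hr (le_of_lt h1γ)
  -- tv ≤ επ for each s'
  have htvle : ∀ s', tv (πstar s') (πhat s') ≤ επ := by
    intro s'
    rw [hεπ]
    exact le_ciSup (f := fun s' : S => tv (πstar s') (πhat s')) (Set.Finite.bddAbove (Set.finite_range _)) s'
  have htvnn : ∀ s', 0 ≤ tv (πstar s') (πhat s') := by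
    intro s'
    unfold tv
    positivity
  have hεnn : 0 ≤ επ := le_trans (htvnn (Classical.arbitrary S)) (htvle _)
  -- sup of |diff|
  have hne : (Finset.univ : Finset (S × A)).Nonempty := univ_nonempty
  set Δ : ℝ := Finset.univ.sup' hne (fun p : S × A => |Qstar p.1 p.2 - Qhat p.1 p.2|)
    with hΔdef
  have hle : ∀ s a, |Qstar s a - Qhat s a| ≤ Δ := by
    intro s a
    exact Finset.le_sup' (fun p : S × A => |Qstar p.1 p.2 - Qhat p.1 p.2|) (mem_univ (s, a))
  have hΔ0 : 0 ≤ Δ := le_trans (abs_nonneg _)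
    (hle (Classical.arbitrary S) (Classical.arbitrary A))
  -- key inner bound
  have hinner : ∀ s' : S,
      |∑ a', (πstar s' a' * Qstar s' a' - πhat s' a' * Qhat s' a')| ≤ Δ + 2 * M * επ := by
    intro s'
    have hsplit : ∀ a', πstar s' a' * Qstar s' a' - πhat s' a' * Qhat s' a'
        = πstar s' a' * (Qstar s' a' - Qhat s' a')
          + (πstar s' a' - πhat s' a') * Qhat s' a' := by
      intro a'; ring
    calc |∑ a', (πstar s' a' * Qstar s' a' - πhat s' a' * Qhat s' a')|
        = |∑ a', (πstar s' a' * (Qstar s' a' - Qhat s' a')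
            + (πstar s' a' - πhat s' a') * Qhat s' a')| := by
          congr 1; exact Finset.sum_congr rfl (fun a' _ => hsplit a')
      _ ≤ ∑ a', |πstar s' a' * (Qstar s' a' - Qhat s' a')
            + (πstar s' a' - πhat s' a') * Qhat s' a'| := Finset.abs_sum_le_sum_abs _ _
      _ ≤ ∑ a', (πstar s' a' * Δ + |πstar s' a' - πhat s' a'| * M) := by
          apply Finset.sum_le_sum
          intro a' _
          calc |πstar s' a' * (Qstar s' a' - Qhat s' a')
                + (πstar s' a' - πhat s' a') * Qhat s' a'|
              ≤ |πstar s' a' * (Qstar s' a' - Qhat s' a')|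
                + |(πstar s' a' - πhat s' a') * Qhat s' a'| := abs_add_le _ _
            _ ≤ πstar s' a' * Δ + |πstar s' a' - πhat s' a'| * M := by
                rw [abs_mul, abs_mul, abs_of_nonneg (hπsnn s' a')]
                exact add_le_add
                  (mul_le_mul_of_nonneg_left (hle s' a') (hπsnn s' a'))
                  (mul_le_mul_of_nonneg_left (hQhat s' a') (abs_nonneg _))
      _ = Δ + 2 * tv (πstar s') (πhat s') * M := by
          rw [Finset.sum_add_distrib, ← Finset.sum_mul, ← Finset.sum_mul, hπssum s']
          unfold tv; ring
      _ ≤ Δ + 2 * M * επ := by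
          have := htvle s'
          nlinarith [htvnn s']
  -- key pointwise bound
  have hkey : ∀ s a, |Qstar s a - Qhat s a| ≤ γ * (Δ + 2 * M * επ) := by
    intro s a
    rw [hBellman s a, abs_mul, abs_of_nonneg hγ0]
    apply mul_le_mul_of_nonneg_left _ hγ0
    calc |∑ s', ∑ a', P s a s' * (πstar s' a' * Qstar s' a' - πhat s' a' * Qhat s' a')|
        ≤ ∑ s', |∑ a', P s a s' * (πstar s' a' * Qstar s' a' - πhat s' a' * Qhat s' a')| :=
          Finset.abs_sum_le_sum_abs _ _
      _ ≤ ∑ s', P s a s' * (Δ + 2 * M * επ) := by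
          apply Finset.sum_le_sum
          intro s' _
          rw [← Finset.mul_sum, abs_mul, abs_of_nonneg (hPnn s a s')]
          exact mul_le_mul_of_nonneg_left (hinner s') (hPnn s a s')
      _ = Δ + 2 * M * επ := by rw [← Finset.sum_mul, hPsum s a, one_mul]
  -- contraction argument
  have hΔle : Δ ≤ γ * (Δ + 2 * M * επ) := by
    apply Finset.sup'_le
    intro p _
    exact hkey p.1 p.2
  have hfinal : Δ ≤ 2 * γ * rmax * επ / (1 - γ) ^ 2 := by
    rw [le_div_iff₀ (by positivity : (0:ℝ) < (1 - γ) ^ 2)]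
    have hMeq : M * (1 - γ) = rmax := by
      rw [hMdef]; field_simp
    have h2 : Δ * (1 - γ) ≤ 2 * γ * M * επ := by nlinarith [hΔle]
    have h3 := mul_le_mul_of_nonneg_right h2 (le_of_lt h1γ)
    have h4 : 2 * γ * M * επ * (1 - γ) = 2 * γ * rmax * επ := by rw [← hMeq]; ring
    nlinarith [h3, h4]
  intro s a
  exact le_trans (hle s a) hfinal
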